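/- Suppose p ≠ 2. Order the four G-orbits on binary quadratic forms as O_1 = {0}, O_2 = orbit of v^2, O_3 = orbit of uv, O_4 = orbit of u^2 − l v^2 (l a non-square), with indicator functions e_i. Then for y ∈ O_i one has q^3 · \hat{e_j}(y) = m_{ij}, where the matrix (m_{ij}) has rows: row 1: [1, q^2−1, q(q^2−1)/2, q(q−1)^2/2]; row 2: [1, −1, (q^2−q)/2, −(q^2−q)/2]; row 3: [1, q−1, −q, 0]; row 4: [1, −(q+1), 0, q]. -/

import Mathlib

open scoped Classical
open MvPolynomial Matrix

noncomputable section

/-- The standard additive character `t ↦ exp(2πi·Tr_{F/F_p}(t)/p)` of a finite field `F`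
of characteristic `p`. -/
def psiF (p : ℕ) [Fact p.Prime] (F : Type*) [Field F] [Fintype F] [CharP F p] (t : F) : ℂ :=
  letI : Algebra (ZMod p) F := ZMod.algebra F p
  Complex.exp (2 * Real.pi * Complex.I * ((Algebra.trace (ZMod p) F t).val : ℂ) / (p : ℂ))

variable {F : Type*} [Field F] [Fintype F]

/-- The binary quadratic form `a u² + b uv + c v²` attached to `(a,b,c)`. -/
def toPolyBQ (x : Fin 3 → F) : MvPolynomial (Fin 2) F :=
  C (x 0) * X 0 ^ 2 + C (x 1) * X 0 * X 1 + C (x 2) * X 1 ^ 2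

/-- Substitution corresponding to the linear change of variables `(u,v) ↦ (u,v)·g`. -/
def subst2 (g : Matrix (Fin 2) (Fin 2) F) (P : MvPolynomial (Fin 2) F) : MvPolynomial (Fin 2) F :=
  aeval (fun j => ∑ i : Fin 2, C (g i j) * X i) P

/-- `x` lies in the `GL₁(F) × GL₂(F)`-orbit of `r` (binary quadratic forms),
for the action `(g₁,g₂)·x(u,v) = g₁·x((u,v)g₂)`. -/
def InOrbitBQ (r x : Fin 3 → F) : Prop :=
  ∃ (t : Fˣ) (g : Matrix.GeneralLinearGroup (Fin 2) F),
    C (t : F) * subst2 (g : Matrix (Fin 2) (Fin 2) F) (toPolyBQ r) = toPolyBQ x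

/-- The bilinear form `[x,x'] = aa' + bb'/2 + cc'` on binary quadratic forms. -/
def bformBQ (x y : Fin 3 → F) : F := x 0 * y 0 + x 1 * y 1 / 2 + x 2 * y 2

/-- The Fourier transform on the space of binary quadratic forms over `F`. -/
def FTBQ (p : ℕ) [Fact p.Prime] [CharP F p] (Φ : (Fin 3 → F) → ℂ) (y : Fin 3 → F) : ℂ :=
  ((Fintype.card F : ℂ) ^ 3)⁻¹ * ∑ x : Fin 3 → F, Φ x * psiF p F (bformBQ x y)


namespace BQA

def act (t : F) (g : Matrix (Fin 2) (Fin 2) F) (x : Fin 3 → F) : Fin 3 → F :=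
  ![t * (x 0 * g 0 0 ^ 2 + x 1 * (g 0 0 * g 0 1) + x 2 * g 0 1 ^ 2),
    t * (2 * (x 0 * (g 0 0 * g 1 0)) + x 1 * (g 0 0 * g 1 1 + g 0 1 * g 1 0)
      + 2 * (x 2 * (g 0 1 * g 1 1))),
    t * (x 0 * g 1 0 ^ 2 + x 1 * (g 1 0 * g 1 1) + x 2 * g 1 1 ^ 2)]

def disc (x : Fin 3 → F) : F := x 1 ^ 2 - 4 * (x 0 * x 2)

lemma eval_toPolyBQ (v : Fin 2 → F) (x : Fin 3 → F) :
    MvPolynomial.eval v (toPolyBQ x) = x 0 * v 0 ^ 2 + x 1 * (v 0 * v 1) + x 2 * v 1 ^ 2 := by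
  simp [toPolyBQ]; ring

lemma toPolyBQ_inj : Function.Injective (toPolyBQ (F := F)) := by
  intro x y h
  have e1 := congrArg (MvPolynomial.eval ![(1:F), 0]) h
  have e2 := congrArg (MvPolynomial.eval ![(0:F), 1]) h
  have e3 := congrArg (MvPolynomial.eval ![(1:F), 1]) h
  simp [eval_toPolyBQ] at e1 e2 e3
  funext i
  fin_cases i
  · exact e1
  · simpa [e1, e2] using e3
  · exact e2

lemma act_toPoly (t : F) (g : Matrix (Fin 2) (Fin 2) F) (x : Fin 3 → F) :
    C t * subst2 g (toPolyBQ x) = toPolyBQ (act t g x) := by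
  simp only [subst2, toPolyBQ, map_add, _root_.map_mul, map_pow, aeval_C, aeval_X, act,
    Fin.sum_univ_two, Matrix.cons_val_zero, Matrix.cons_val_one, Matrix.head_cons,
    Matrix.cons_val_two, Matrix.tail_cons, map_ofNat, C_add, C_mul, MvPolynomial.algebraMap_eq]
  ring

lemma act_act (t s : F) (g h : Matrix (Fin 2) (Fin 2) F) (x : Fin 3 → F) :
    act t g (act s h x) = act (t * s) (g * h) x := by
  funext i
  fin_cases i <;>
    simp [act, Matrix.mul_apply, Fin.sum_univ_two] <;> ring

lemma act_one (x : Fin 3 → F) : act 1 1 x = x := by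
  funext i
  fin_cases i <;>
    simp [act, Matrix.one_apply] <;> ring

lemma disc_act (t : F) (g : Matrix (Fin 2) (Fin 2) F) (x : Fin 3 → F) :
    disc (act t g x) = (t * g.det) ^ 2 * disc x := by
  simp [act, disc, Matrix.det_fin_two]
  ring

def InOrb (r x : Fin 3 → F) : Prop :=
  ∃ t : F, t ≠ 0 ∧ ∃ m : Matrix (Fin 2) (Fin 2) F, m.det ≠ 0 ∧ act t m r = x

lemma inOrbitBQ_iff (r x : Fin 3 → F) : InOrbitBQ r x ↔ InOrb r x := by
  constructor
  · rintro ⟨t, g, hg⟩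
    rw [act_toPoly] at hg
    refine ⟨t, t.ne_zero, (g : Matrix (Fin 2) (Fin 2) F), ?_, toPolyBQ_inj hg⟩
    exact (Matrix.isUnit_iff_isUnit_det _ |>.mp g.isUnit).ne_zero
  · rintro ⟨t, ht, m, hm, h⟩
    refine ⟨Units.mk0 t ht, Matrix.GeneralLinearGroup.mkOfDetNeZero m hm, ?_⟩
    rw [act_toPoly]
    exact congrArg toPolyBQ h

lemma inOrb_act (t : F) (ht : t ≠ 0) (m : Matrix (Fin 2) (Fin 2) F) (hm : m.det ≠ 0)
    {r x : Fin 3 → F} (h : InOrb r x) : InOrb r (act t m x) := by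
  obtain ⟨s, hs, n, hn, hx⟩ := h
  exact ⟨t * s, mul_ne_zero ht hs, m * n, by simp [Matrix.det_mul]; exact ⟨hm, hn⟩,
    by rw [← hx, act_act]⟩

lemma inOrb_act_iff (t : F) (ht : t ≠ 0) (m : Matrix (Fin 2) (Fin 2) F) (hm : m.det ≠ 0)
    (r x : Fin 3 → F) : InOrb r (act t m x) ↔ InOrb r x := by
  constructor
  · intro h
    have := inOrb_act t⁻¹ (inv_ne_zero ht) m⁻¹
      (by rw [Matrix.det_nonsing_inv, Ring.inverse_eq_inv']; exact inv_ne_zero hm) h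
    rwa [act_act, inv_mul_cancel₀ ht, Matrix.nonsing_inv_mul m hm.isUnit, act_one] at this
  · exact inOrb_act t ht m hm


lemma sq_mul_nonsquare {s w : F} (hs : s ≠ 0) (hw : ¬IsSquare w) : ¬IsSquare (s ^ 2 * w) := by
  rintro ⟨e, he⟩
  exact hw ⟨e / s, by field_simp at he ⊢; linear_combination he⟩

lemma nonsquare_mul_nonsquare {u w : F} (hu : ¬IsSquare u) (hw : ¬IsSquare w) :
    IsSquare (u * w) := by
  have h1 := quadraticChar_neg_one_iff_not_isSquare.mpr hu
  have h2 := quadraticChar_neg_one_iff_not_isSquare.mpr hw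
  have hu0 : u ≠ 0 := fun h => hu (h ▸ ⟨0, by ring⟩)
  have hw0 : w ≠ 0 := fun h => hw (h ▸ ⟨0, by ring⟩)
  refine (quadraticChar_one_iff_isSquare (mul_ne_zero hu0 hw0)).mp ?_
  rw [_root_.map_mul, h1, h2]; ring

lemma orb0 (x : Fin 3 → F) : InOrb ![0, 0, 0] x ↔ x = ![(0 : F), 0, 0] := by
  constructor
  · rintro ⟨t, ht, m, hm, h⟩
    rw [← h]
    funext i; fin_cases i <;> simp [act]
  · rintro rfl
    exact ⟨1, one_ne_zero, 1, by simp, by funext i; fin_cases i <;> simp [act]⟩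

lemma orb1 (h2 : (2 : F) ≠ 0) (x : Fin 3 → F) :
    InOrb ![0, 0, 1] x ↔ x ≠ ![(0 : F), 0, 0] ∧ disc x = 0 := by
  constructor
  · rintro ⟨t, ht, m, hm, h⟩
    constructor
    · intro hx
      rw [hx] at h
      have h0 := congrFun h 0
      have h2' := congrFun h 2
      simp [act] at h0 h2'
      rcases h0 with h0 | h0; · exact ht h0
      rcases h2' with h2' | h2'; · exact ht h2'
      apply hm
      rw [Matrix.det_fin_two, h0, h2']
      ring
    · rw [← h, disc_act]
      simp [disc]
  · rintro ⟨hx, hd⟩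
    have hd' : x 1 ^ 2 = 4 * (x 0 * x 2) := by
      have := hd; unfold disc at this; linear_combination this
    by_cases ha : x 0 ≠ 0
    · refine ⟨x 0, ha, !![0, 1; -1, x 1 / (2 * x 0)], ?_, ?_⟩
      · rw [Matrix.det_fin_two_of]; simp
      · funext i; fin_cases i
        · simp [act]
        · simp [act]; field_simp
        · simp [act]; field_simp; linear_combination hd'
    · push_neg at ha
      have hb : x 1 = 0 := by
        have : x 1 ^ 2 = 0 := by rw [hd', ha]; ring
        exact pow_eq_zero_iff (by norm_num) |>.mp this
      have hc : x 2 ≠ 0 := by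
        intro hc
        apply hx; funext i; fin_cases i <;> simp [ha, hb, hc]
      refine ⟨x 2, hc, 1, by simp, ?_⟩
      funext i; fin_cases i <;> simp [act, Matrix.one_apply, ha, hb]

lemma orb2 (h2 : (2 : F) ≠ 0) (x : Fin 3 → F) :
    InOrb ![0, 1, 0] x ↔ disc x ≠ 0 ∧ IsSquare (disc x) := by
  constructor
  · rintro ⟨t, ht, m, hm, h⟩
    rw [← h, disc_act]
    have hdr : disc ![(0:F), 1, 0] = 1 := by simp [disc]
    rw [hdr, mul_one]
    exact ⟨pow_ne_zero _ (mul_ne_zero ht hm), ⟨t * m.det, by ring⟩⟩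
  · rintro ⟨hd, s, hs⟩
    have hs0 : s ≠ 0 := by rintro rfl; exact hd (by rw [hs]; ring)
    have hss : disc x = s ^ 2 := by rw [hs]; ring
    have hd' : x 1 ^ 2 - 4 * (x 0 * x 2) = s ^ 2 := by rw [← hss]; rfl
    by_cases ha : x 0 ≠ 0
    · refine ⟨1, one_ne_zero, !![1, x 0; (x 1 - s) / (2 * x 0), (x 1 + s) / 2], ?_, ?_⟩
      · rw [Matrix.det_fin_two_of]
        have hdet : (1 : F) * ((x 1 + s) / 2) - x 0 * ((x 1 - s) / (2 * x 0)) = s := by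
          field_simp; ring
        rw [hdet]; exact hs0
      · funext i; fin_cases i
        · simp [act]
        · simp [act]; field_simp; ring
        · simp [act]; field_simp; linear_combination hd'
    · push_neg at ha
      have hb : x 1 ≠ 0 := by
        intro hb; apply hd; simp [disc, ha, hb]
      refine ⟨1, one_ne_zero, !![0, x 1; 1, x 2], ?_, ?_⟩
      · rw [Matrix.det_fin_two_of]; simpa using hb
      · funext i; fin_cases i <;> simp [act, ha]

lemma orb3 (h2 : (2 : F) ≠ 0) (l : F) (hl : ¬IsSquare l) (x : Fin 3 → F) :
    InOrb ![1, 0, -l] x ↔ ¬IsSquare (disc x) := by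
  have hl0 : l ≠ 0 := fun h => hl (h ▸ ⟨0, by ring⟩)
  have hdr : disc ![(1 : F), 0, -l] = 4 * l := by
    simp only [disc, Matrix.cons_val_one, Matrix.head_cons, Matrix.cons_val_zero,
      Matrix.cons_val_two, Matrix.tail_cons]
    ring
  have h4l : ¬IsSquare (4 * l) := by
    rintro ⟨e, he⟩
    exact hl ⟨e / 2, by field_simp; linear_combination he⟩
  constructor
  · rintro ⟨t, ht, m, hm, h⟩
    rw [← h, disc_act, hdr]
    exact sq_mul_nonsquare (mul_ne_zero ht hm) h4l
  · intro hd
    have hd0 : disc x ≠ 0 := fun h => hd (h ▸ ⟨0, by ring⟩)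
    have ha : x 0 ≠ 0 := by
      intro ha
      exact hd ⟨x 1, by unfold disc; rw [ha]; ring⟩
    obtain ⟨e, he⟩ := nonsquare_mul_nonsquare hd h4l
    have h40 : (4 : F) ≠ 0 := by
      have h42 : (4 : F) = 2 * 2 := by norm_num
      rw [h42]; exact mul_ne_zero h2 h2
    have he0 : e ≠ 0 := by
      rintro rfl
      rw [mul_zero] at he
      exact mul_ne_zero hd0 (mul_ne_zero h40 hl0) he
    obtain ⟨m, hm0, hdx⟩ : ∃ m : F, m ≠ 0 ∧ x 1 ^ 2 - 4 * (x 0 * x 2) = 4 * l * m ^ 2 := by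
      refine ⟨e / (4 * l), div_ne_zero he0 (mul_ne_zero h40 hl0), ?_⟩
      have hgoal : disc x = 4 * l * (e / (4 * l)) ^ 2 := by
        field_simp
        linear_combination he
      exact hgoal
    refine ⟨x 0, ha, !![1, 0; x 1 / (2 * x 0), m / x 0], ?_, ?_⟩
    · rw [Matrix.det_fin_two_of]
      simpa using ⟨hm0, ha⟩
    · funext i; fin_cases i
      · simp [act]
      · simp [act]; field_simp
      · simp [act]; field_simp; linear_combination hdx


section psi
variable (p : ℕ) [Fact p.Prime] [CharP F p]

def ψa (F : Type*) [Field F] [Fintype F] [CharP F p] : AddChar F ℂ :=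
  letI : Algebra (ZMod p) F := ZMod.algebra F p
  haveI : NeZero p := ⟨(Fact.out : p.Prime).ne_zero⟩
  (ZMod.stdAddChar (N := p)).compAddMonoidHom (Algebra.trace (ZMod p) F).toAddMonoidHom

lemma psiF_eq : psiF p F = ⇑(ψa p F) := by
  letI : Algebra (ZMod p) F := ZMod.algebra F p
  haveI : NeZero p := ⟨(Fact.out : p.Prime).ne_zero⟩
  funext t
  simp only [psiF, ψa, AddChar.compAddMonoidHom_apply, LinearMap.toAddMonoidHom_coe]
  rw [ZMod.stdAddChar_apply, ZMod.toCircle_apply]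

lemma ψa_ne_one : ψa p F ≠ 1 := by
  have hrc : ringChar F = p := ringChar.eq F p
  subst hrc
  letI : Algebra (ZMod (ringChar F)) F := ZMod.algebra F (ringChar F)
  haveI : NeZero (ringChar F) := ⟨(Fact.out : (ringChar F).Prime).ne_zero⟩
  obtain ⟨a, ha⟩ := FiniteField.trace_to_zmod_nondegenerate F (one_ne_zero (α := F))
  rw [one_mul] at ha
  rw [AddChar.ne_one_iff]
  refine ⟨a, fun hf => ha ?_⟩
  have := (ZMod.isPrimitive_stdAddChar (ringChar F)).zmod_char_eq_one_iff (ringChar F)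
    (Algebra.trace (ZMod (ringChar F)) F a)
  exact this.mp hf

lemma ψa_prim : (ψa p F).IsPrimitive := AddChar.IsPrimitive.of_ne_one (ψa_ne_one p)

end psi

section chars
variable (ψ : AddChar F ℂ)

def χc (F : Type*) [Field F] [Fintype F] : MulChar F ℂ :=
  (quadraticChar F).ringHomComp (Int.castRingHom ℂ)

lemma χc_apply (a : F) : χc F a = ((quadraticChar F a : ℤ) : ℂ) := rfl

lemma χc_zero : χc F 0 = 0 := by rw [χc_apply, quadraticChar_zero]; norm_num

lemma χc_mul (a b : F) : χc F (a * b) = χc F a * χc F b := map_mul _ a b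

lemma χc_sq_self {a : F} (ha : a ≠ 0) : χc F a * χc F a = 1 := by
  rw [← χc_mul]
  rcases quadraticChar_dichotomy ha with h | h <;>
    rw [χc_apply, _root_.map_mul, h] <;> norm_num

lemma χc_isSq {a : F} (ha : a ≠ 0) (h : IsSquare a) : χc F a = 1 := by
  rw [χc_apply, (quadraticChar_one_iff_isSquare ha).mpr h]; norm_num

lemma χc_nonSq {a : F} (h : ¬IsSquare a) : χc F a = -1 := by
  rw [χc_apply, quadraticChar_neg_one_iff_not_isSquare.mpr h]; norm_num

lemma χc_sq_val (a : F) : χc F (a ^ 2) = if a = 0 then 0 else 1 := by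
  split_ifs with h
  · rw [h]; simpa using χc_zero
  · rw [χc_apply, quadraticChar_sq_one' h]; norm_num

lemma χc_ne_one (hF2 : ringChar F ≠ 2) : χc F ≠ 1 :=
  (MulChar.ringHomComp_ne_one_iff (fun _ _ h => by simpa using h)).mpr
    (quadraticChar_ne_one hF2)

lemma sum_χc (hF2 : ringChar F ≠ 2) : ∑ t : F, χc F t = 0 := by
  calc ∑ t : F, χc F t = ∑ t : F, ((quadraticChar F t : ℤ) : ℂ) := rfl
    _ = ((∑ t : F, quadraticChar F t : ℤ) : ℂ) := by push_cast; rfl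
    _ = 0 := by rw [quadraticChar_sum_zero hF2]; norm_num

lemma sum_psi (hψ : ψ ≠ 1) : ∑ t : F, ψ t = 0 := AddChar.sum_eq_zero_of_ne_one hψ

lemma sum_psi_mul (hψ : ψ ≠ 1) {c : F} (hc : c ≠ 0) : ∑ t : F, ψ (c * t) = 0 := by
  rw [← sum_psi ψ hψ]
  exact Fintype.sum_equiv (Equiv.mulLeft₀ c hc) _ _ (fun t => rfl)

lemma sq_count (hF2 : ringChar F ≠ 2) (d : F) :
    ((Finset.univ.filter fun b : F => b ^ 2 = d).card : ℂ) = 1 + χc F d := by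
  have h := quadraticChar_card_sqrts hF2 d
  rw [χc_apply]
  rw [show (Finset.univ.filter fun b : F => b ^ 2 = d) = {x : F | x ^ 2 = d}.toFinset by
    ext b; simp]
  exact_mod_cast congrArg (fun n : ℤ => (n : ℂ)) (h.trans (add_comm _ 1))

lemma sum_ite_sq (hF2 : ringChar F ≠ 2) (d : F) (z : ℂ) :
    ∑ b : F, (if b ^ 2 = d then z else 0) = (1 + χc F d) * z := by
  rw [Finset.sum_ite, Finset.sum_const, Finset.sum_const_zero, add_zero, nsmul_eq_mul,
    sq_count hF2]

def Gc (ψ : AddChar F ℂ) : ℂ := gaussSum (χc F) ψ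

lemma Gc_sq (hF2 : ringChar F ≠ 2) (hψ : ψ ≠ 1) :
    Gc ψ ^ 2 = χc F (-1) * (Fintype.card F : ℂ) :=
  gaussSum_sq (χc_ne_one hF2) ((quadraticChar_isQuadratic F).comp _)
    (AddChar.IsPrimitive.of_ne_one hψ)

lemma sum_chi_psi {c : F} (hc : c ≠ 0) :
    ∑ t : F, χc F t * ψ (c * t) = χc F c * Gc ψ := by
  have h := gaussSum_mulShift (χc F) ψ (Units.mk0 c hc)
  have hms : gaussSum (χc F) (ψ.mulShift (Units.mk0 c hc)) = ∑ t : F, χc F t * ψ (c * t) := by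
    simp [gaussSum, AddChar.mulShift_apply]
  rw [hms, Units.val_mk0] at h
  rw [Gc, ← h, ← mul_assoc, χc_sq_self hc, one_mul]

lemma sum_sq_reindex (hF2 : ringChar F ≠ 2) (f : F → ℂ) :
    ∑ b : F, f (b ^ 2) = ∑ d : F, (1 + χc F d) * f d := by
  have h1 : ∀ d : F, ∑ b ∈ Finset.univ.filter (fun b : F => b ^ 2 = d), f (b ^ 2)
      = (1 + χc F d) * f d := by
    intro d
    have hcg : ∀ b ∈ Finset.univ.filter (fun b : F => b ^ 2 = d), f (b ^ 2) = f d :=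
      fun b hb => by rw [(Finset.mem_filter.mp hb).2]
    rw [Finset.sum_congr rfl hcg, Finset.sum_const, nsmul_eq_mul, sq_count hF2]
  calc ∑ b : F, f (b ^ 2)
      = ∑ d : F, ∑ b ∈ Finset.univ.filter (fun b : F => b ^ 2 = d), f (b ^ 2) :=
        (Finset.sum_fiberwise_of_maps_to (fun b _ => Finset.mem_univ _) _).symm
    _ = ∑ d : F, (1 + χc F d) * f d := Finset.sum_congr rfl fun d _ => h1 d

lemma sum_psi_sq (hψ : ψ ≠ 1) (hF2 : ringChar F ≠ 2) {c : F} (hc : c ≠ 0) :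
    ∑ t : F, ψ (c * t ^ 2) = χc F c * Gc ψ := by
  calc ∑ t : F, ψ (c * t ^ 2) = ∑ d : F, (1 + χc F d) * ψ (c * d) :=
        sum_sq_reindex hF2 (fun d => ψ (c * d))
    _ = ∑ d : F, (ψ (c * d) + χc F d * ψ (c * d)) := by
        refine Finset.sum_congr rfl fun d _ => by ring
    _ = (∑ d : F, ψ (c * d)) + ∑ d : F, χc F d * ψ (c * d) := Finset.sum_add_distrib
    _ = 0 + χc F c * Gc ψ := by rw [sum_psi_mul ψ hψ hc, sum_chi_psi ψ hc]
    _ = χc F c * Gc ψ := zero_add _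

lemma sum_chi_shift (hF2 : ringChar F ≠ 2) (d : F) : ∑ t : F, χc F (t + d) = 0 := by
  rw [← sum_χc hF2]
  exact Fintype.sum_equiv (Equiv.addRight d) _ _ (fun t => rfl)

lemma sum_chi_chi (hF2 : ringChar F ≠ 2) {d : F} (hd : d ≠ 0) :
    ∑ t : F, χc F t * χc F (t + d) = -1 := by
  have step1 : ∑ t : F, χc F t * χc F (t + d)
      = ∑ t ∈ Finset.univ.erase 0, χc F t * χc F (t + d) :=
    (Finset.sum_erase _ (by rw [χc_zero, zero_mul])).symm
  have step2 : ∑ t ∈ Finset.univ.erase 0, χc F t * χc F (t + d)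
      = ∑ t ∈ Finset.univ.erase 0, χc F (1 + d * t⁻¹) := by
    refine Finset.sum_congr rfl fun t ht => ?_
    have ht0 : t ≠ 0 := Finset.ne_of_mem_erase ht
    have : t + d = t * (1 + d * t⁻¹) := by field_simp
    rw [this, χc_mul, ← mul_assoc, χc_sq_self ht0, one_mul]
  have step3 : ∑ t ∈ Finset.univ.erase 0, χc F (1 + d * t⁻¹)
      = ∑ u ∈ Finset.univ.erase 1, χc F u := by
    refine Finset.sum_nbij' (fun t => 1 + d * t⁻¹) (fun u => d * (u - 1)⁻¹) ?_ ?_ ?_ ?_ ?_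
    · intro t ht
      have ht0 : t ≠ 0 := Finset.ne_of_mem_erase ht
      refine Finset.mem_erase.mpr ⟨?_, Finset.mem_univ _⟩
      intro hcon
      have : d * t⁻¹ = 0 := by linear_combination hcon
      exact (mul_ne_zero hd (inv_ne_zero ht0)) this
    · intro u hu
      have hu1 : u ≠ 1 := Finset.ne_of_mem_erase hu
      refine Finset.mem_erase.mpr ⟨?_, Finset.mem_univ _⟩
      exact mul_ne_zero hd (inv_ne_zero (sub_ne_zero.mpr hu1))
    · intro t ht
      have ht0 : t ≠ 0 := Finset.ne_of_mem_erase ht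
      field_simp
      simp [hd]
    · intro u hu
      have hu1 : u ≠ 1 := Finset.ne_of_mem_erase hu
      have : u - 1 ≠ 0 := sub_ne_zero.mpr hu1
      field_simp
      ring
    · intro t _
      rfl
  have step4 : ∑ u ∈ Finset.univ.erase 1, χc F u = -1 := by
    rw [Finset.sum_erase_eq_sub (Finset.mem_univ _), sum_χc hF2, _root_.map_one]
    ring
  rw [step1, step2, step3, step4]

lemma sum_chi_sq_add (hF2 : ringChar F ≠ 2) (d : F) :
    ∑ b : F, χc F (b ^ 2 + d)
      = if d = 0 then (Fintype.card F : ℂ) - 1 else -1 := by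
  split_ifs with h
  · subst h
    calc ∑ b : F, χc F (b ^ 2 + 0) = ∑ b : F, (if b = 0 then 0 else 1 : ℂ) :=
          Finset.sum_congr rfl fun b _ => by rw [add_zero, χc_sq_val]
      _ = ∑ b : F, ((1 : ℂ) - if b = 0 then 1 else 0) :=
          Finset.sum_congr rfl fun b _ => by split_ifs <;> ring
      _ = (Fintype.card F : ℂ) - 1 := by
          rw [Finset.sum_sub_distrib, Finset.sum_const, Finset.sum_ite_eq' Finset.univ (0 : F)]
          simp [Finset.card_univ]
  · calc ∑ b : F, χc F (b ^ 2 + d) = ∑ t : F, (1 + χc F t) * χc F (t + d) :=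
          sum_sq_reindex hF2 (fun t => χc F (t + d))
      _ = ∑ t : F, (χc F (t + d) + χc F t * χc F (t + d)) :=
          Finset.sum_congr rfl fun t _ => by ring
      _ = (∑ t : F, χc F (t + d)) + ∑ t : F, χc F t * χc F (t + d) := Finset.sum_add_distrib
      _ = 0 + -1 := by rw [sum_chi_shift hF2, sum_chi_chi hF2 h]
      _ = -1 := by ring

end chars

-- ==== part 4: triple sums, computations, master lemma ====
section sums4
variable (ψ : AddChar F ℂ)

def vecEquiv3 : (F × F × F) ≃ (Fin 3 → F) where
  toFun p := ![p.1, p.2.1, p.2.2]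
  invFun x := (x 0, x 1, x 2)
  left_inv p := by simp
  right_inv x := by funext i; fin_cases i <;> simp

lemma sum_abc (f : (Fin 3 → F) → ℂ) :
    ∑ x : Fin 3 → F, f x = ∑ a : F, ∑ b : F, ∑ c : F, f ![a, b, c] := by
  rw [← Equiv.sum_comp (vecEquiv3 (F := F)) f, Fintype.sum_prod_type]
  refine Finset.sum_congr rfl fun a _ => ?_
  rw [Fintype.sum_prod_type]
  rfl

lemma sum_acb (f : (Fin 3 → F) → ℂ) :
    ∑ x : Fin 3 → F, f x = ∑ a : F, ∑ c : F, ∑ b : F, f ![a, b, c] := by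
  rw [sum_abc]
  exact Finset.sum_congr rfl fun a _ => Finset.sum_comm

lemma sum_bac (f : (Fin 3 → F) → ℂ) :
    ∑ x : Fin 3 → F, f x = ∑ b : F, ∑ a : F, ∑ c : F, f ![a, b, c] := by
  rw [sum_abc]; exact Finset.sum_comm

lemma sum_bca (f : (Fin 3 → F) → ℂ) :
    ∑ x : Fin 3 → F, f x = ∑ b : F, ∑ c : F, ∑ a : F, f ![a, b, c] := by
  rw [sum_bac]
  exact Finset.sum_congr rfl fun b _ => Finset.sum_comm

lemma sum_cba (f : (Fin 3 → F) → ℂ) :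
    ∑ x : Fin 3 → F, f x = ∑ c : F, ∑ b : F, ∑ a : F, f ![a, b, c] := by
  rw [sum_bca]; exact Finset.sum_comm

lemma disc_mk (a b c : F) : disc ![a, b, c] = b ^ 2 - 4 * (a * c) := by
  simp [disc]

lemma sum_psi_half (hψ : ψ ≠ 1) (h2 : (2 : F) ≠ 0) : ∑ b : F, ψ (b / 2) = 0 := by
  have h : ∀ b : F, ψ (b / 2) = ψ (2⁻¹ * b) := fun b => by rw [div_eq_inv_mul]
  rw [Finset.sum_congr rfl fun b _ => h b]
  exact sum_psi_mul ψ hψ (inv_ne_zero h2)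

lemma psi_split (l : F) (a c : F) : ψ (a - l * c) = ψ a * ψ (-l * c) := by
  rw [sub_eq_add_neg, ← neg_mul]
  exact ψ.map_add_eq_mul a (-l * c)

lemma sum_sum_mul (f g : F → ℂ) :
    ∑ a : F, ∑ c : F, f a * g c = (∑ a : F, f a) * (∑ c : F, g c) :=
  (Finset.sum_mul_sum _ _ _ _).symm

lemma sum_ite_zero' (X : ℂ) : ∑ a : F, (if a = 0 then X else 0) = X := by
  rw [Finset.sum_ite_eq' Finset.univ (0 : F) (fun _ => X)]
  simp

lemma chi4 (h2 : (2 : F) ≠ 0) : χc F (4 : F) = 1 := by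
  have h : (4 : F) = 2 ^ 2 := by norm_num
  rw [h, χc_sq_val]
  simp [h2]

-- the affine sums
lemma sum_chi_affine (hF2 : ringChar F ≠ 2) {m : F} (hm : m ≠ 0) (e : F) :
    ∑ t : F, χc F (m * t + e) = 0 := by
  rw [← sum_χc hF2]
  exact Fintype.sum_equiv ((Equiv.mulLeft₀ m hm).trans (Equiv.addRight e)) _ _ (fun t => rfl)

end sums4

-- ==== part 5: the twelve sums ====
section comp
variable (ψ : AddChar F ℂ)

lemma count_all : ∑ _x : Fin 3 → F, (1 : ℂ) = (Fintype.card F : ℂ) ^ 3 := by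
  rw [Finset.sum_const, nsmul_eq_mul, mul_one, Finset.card_univ, Fintype.card_fun,
    Fintype.card_fin]
  push_cast
  ring

lemma A1 (hψ : ψ ≠ 1) : ∑ x : Fin 3 → F, ψ (x 2) = 0 := by
  rw [sum_abc (fun x => ψ (x 2))]
  simp [sum_psi ψ hψ]

lemma A2 (hψ : ψ ≠ 1) (h2 : (2 : F) ≠ 0) : ∑ x : Fin 3 → F, ψ (x 1 / 2) = 0 := by
  rw [sum_acb (fun x => ψ (x 1 / 2))]
  simp [sum_psi_half ψ hψ h2]

lemma A3 (hψ : ψ ≠ 1) (l : F) (hl0 : l ≠ 0) :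
    ∑ x : Fin 3 → F, ψ (x 0 - l * x 2) = 0 := by
  rw [sum_abc (fun x => ψ (x 0 - l * x 2))]
  have hin : ∀ a : F, ∑ c : F, ψ (a - l * c) = 0 := by
    intro a
    rw [Finset.sum_congr rfl fun c _ => psi_split ψ l a c, ← Finset.mul_sum,
      sum_psi_mul ψ hψ (neg_ne_zero.mpr hl0), mul_zero]
  simp only [Matrix.cons_val_zero, Matrix.cons_val_two, Matrix.tail_cons, Matrix.head_cons]
  simp [hin]

lemma B0 (hF2 : ringChar F ≠ 2) (h2 : (2 : F) ≠ 0) :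
    ∑ x : Fin 3 → F, (if disc x = 0 then (1 : ℂ) else 0) = (Fintype.card F : ℂ) ^ 2 := by
  rw [sum_acb (fun x => if disc x = 0 then (1 : ℂ) else 0)]
  have step : ∀ a c : F, (∑ b : F, if disc ![a, b, c] = 0 then (1 : ℂ) else 0)
      = 1 * 1 + (χc F 4 * χc F a) * χc F c := by
    intro a c
    simp only [disc_mk, sub_eq_zero]
    rw [sum_ite_sq hF2, mul_one, χc_mul, χc_mul]
    ring
  rw [Finset.sum_congr rfl fun a _ => Finset.sum_congr rfl fun c _ => step a c]
  simp only [Finset.sum_add_distrib]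
  rw [sum_sum_mul, sum_sum_mul, ← Finset.mul_sum, sum_χc hF2]
  simp [Finset.card_univ]
  ring

lemma B1 (hψ : ψ ≠ 1) (hF2 : ringChar F ≠ 2) :
    ∑ x : Fin 3 → F, (if disc x = 0 then ψ (x 2) else 0) = 0 := by
  rw [sum_acb (fun x => if disc x = 0 then ψ (x 2) else 0)]
  have step : ∀ a c : F, (∑ b : F, if disc ![a, b, c] = 0 then ψ (![a, b, c] 2) else 0)
      = 1 * ψ c + (χc F 4 * χc F a) * (χc F c * ψ c) := by
    intro a c
    simp only [disc_mk, sub_eq_zero, Matrix.cons_val_two, Matrix.tail_cons, Matrix.head_cons]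
    rw [sum_ite_sq hF2, χc_mul, χc_mul]
    ring
  rw [Finset.sum_congr rfl fun a _ => Finset.sum_congr rfl fun c _ => step a c]
  simp only [Finset.sum_add_distrib]
  rw [sum_sum_mul, sum_sum_mul, ← Finset.mul_sum, sum_χc hF2]
  simp [sum_psi ψ hψ]

lemma B2 (hψ : ψ ≠ 1) (hF2 : ringChar F ≠ 2) (h2 : (2 : F) ≠ 0) :
    ∑ x : Fin 3 → F, (if disc x = 0 then ψ (x 1 / 2) else 0) = (Fintype.card F : ℂ) := by
  rw [sum_bac (fun x => if disc x = 0 then ψ (x 1 / 2) else 0)]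
  have hin : ∀ b a : F, (∑ c : F, if disc ![a, b, c] = 0 then ψ (![a, b, c] 1 / 2) else 0)
      = if a = 0 then (if b = 0 then (Fintype.card F : ℂ) else 0) else ψ (b / 2) := by
    intro b a
    simp only [disc_mk, sub_eq_zero, Matrix.cons_val_one, Matrix.head_cons, Matrix.cons_val_zero]
    by_cases ha : a = 0
    · subst ha
      simp only [zero_mul, mul_zero, if_pos rfl]
      by_cases hb : b = 0
      · subst hb
        simp only [if_pos rfl]
        rw [Finset.sum_congr rfl fun c _ => if_pos (by ring)]
        rw [Finset.sum_const, nsmul_eq_mul, Finset.card_univ]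
        simp
      · rw [Finset.sum_congr rfl fun c _ => if_neg (pow_ne_zero 2 hb), if_neg hb]
        simp
    · rw [if_neg ha]
      have : ∀ c : F, (b ^ 2 = 4 * (a * c)) ↔ (c = b ^ 2 / (4 * a)) := by
        intro c
        have h4a : 4 * a ≠ 0 := mul_ne_zero (by
          have : (4 : F) = 2 * 2 := by norm_num
          rw [this]; exact mul_ne_zero h2 h2) ha
        constructor
        · intro h; rw [h]; field_simp; rw [mul_div_cancel_right₀ _ (left_ne_zero_of_mul h4a)]
        · intro h; subst h; field_simp; rw [mul_div_cancel_right₀ _ (left_ne_zero_of_mul h4a)]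
      rw [Finset.sum_congr rfl fun c _ => by rw [this c]]
      rw [Finset.sum_ite_eq' Finset.univ (b ^ 2 / (4 * a)) (fun _ => ψ (b / 2))]
      simp
  rw [Finset.sum_congr rfl fun b _ => Finset.sum_congr rfl fun a _ => hin b a]
  have hmid : ∀ b : F, (∑ a : F, if a = 0 then (if b = 0 then (Fintype.card F : ℂ) else 0)
      else ψ (b / 2)) = (if b = 0 then (Fintype.card F : ℂ) else 0)
        + ((Fintype.card F : ℂ) - 1) * ψ (b / 2) := by
    intro b
    have hpt : ∀ a : F, (if a = 0 then (if b = 0 then (Fintype.card F : ℂ) else 0) else ψ (b / 2))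
        = (if a = 0 then (if b = 0 then (Fintype.card F : ℂ) else 0) - ψ (b / 2) else 0)
          + ψ (b / 2) := by
      intro a; split_ifs <;> ring
    rw [Finset.sum_congr rfl fun a _ => hpt a, Finset.sum_add_distrib, sum_ite_zero',
      Finset.sum_const, nsmul_eq_mul, Finset.card_univ]
    ring
  rw [Finset.sum_congr rfl fun b _ => hmid b, Finset.sum_add_distrib, sum_ite_zero',
    ← Finset.mul_sum, sum_psi_half ψ hψ h2]
  ring

lemma B3 (hψ : ψ ≠ 1) (hF2 : ringChar F ≠ 2) (h2 : (2 : F) ≠ 0) (l : F) (hl : ¬IsSquare l) :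
    ∑ x : Fin 3 → F, (if disc x = 0 then ψ (x 0 - l * x 2) else 0)
      = -(Fintype.card F : ℂ) := by
  have hl0 : l ≠ 0 := fun h => hl (h ▸ ⟨0, by ring⟩)
  rw [sum_acb (fun x => if disc x = 0 then ψ (x 0 - l * x 2) else 0)]
  have step : ∀ a c : F, (∑ b : F, if disc ![a, b, c] = 0 then ψ (![a, b, c] 0 - l * ![a, b, c] 2) else 0)
      = ψ a * ψ (-l * c) + (χc F 4 * (χc F a * ψ a)) * (χc F c * ψ (-l * c)) := by
    intro a c
    simp only [disc_mk, sub_eq_zero, Matrix.cons_val_zero, Matrix.cons_val_two,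
      Matrix.tail_cons, Matrix.head_cons]
    rw [sum_ite_sq hF2, psi_split ψ l a c, χc_mul, χc_mul]
    ring
  rw [Finset.sum_congr rfl fun a _ => Finset.sum_congr rfl fun c _ => step a c]
  simp only [Finset.sum_add_distrib]
  rw [sum_sum_mul, sum_sum_mul, sum_psi ψ hψ, sum_psi_mul ψ hψ (neg_ne_zero.mpr hl0)]
  have hga : ∑ a : F, χc F 4 * (χc F a * ψ a) = Gc ψ := by
    rw [← Finset.mul_sum, chi4 h2, one_mul]; rfl
  have hgc : ∑ c : F, χc F c * ψ (-l * c) = χc F (-l) * Gc ψ :=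
    sum_chi_psi ψ (neg_ne_zero.mpr hl0)
  rw [hga, hgc]
  have hml : χc F (-l) = χc F (-1) * (-1) := by
    rw [show (-l : F) = -1 * l by ring, χc_mul, χc_nonSq hl]
  have hm1 : χc F (-1 : F) * χc F (-1 : F) = 1 := χc_sq_self (by norm_num)
  have hGsq := Gc_sq ψ hF2 hψ
  rw [hml]
  have expand : Gc ψ * (χc F (-1) * -1 * Gc ψ) = -(χc F (-1) * Gc ψ ^ 2) := by ring
  rw [zero_mul, zero_add, expand, hGsq, ← mul_assoc, hm1]
  ring

end comp

-- ==== part 6: the C sums ====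
section comp2
variable (ψ : AddChar F ℂ)

lemma hinC (hF2 : ringChar F ≠ 2) (h2 : (2 : F) ≠ 0) (c b : F) :
    (∑ a : F, χc F (b ^ 2 - 4 * (a * c)))
      = if c = 0 then (Fintype.card F : ℂ) * χc F (b ^ 2) else 0 := by
  have h40 : (4 : F) ≠ 0 := by
    have : (4 : F) = 2 * 2 := by norm_num
    rw [this]; exact mul_ne_zero h2 h2
  by_cases hc : c = 0
  · subst hc
    rw [if_pos rfl, Finset.sum_congr rfl fun a _ => by rw [mul_zero, mul_zero, sub_zero],
      Finset.sum_const, nsmul_eq_mul, Finset.card_univ]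
  · rw [if_neg hc, ← sum_chi_affine hF2 (neg_ne_zero.mpr (mul_ne_zero h40 hc)) (b ^ 2)]
    exact Finset.sum_congr rfl fun a _ => congrArg (χc F) (by ring)

lemma sum_chi_sq' (hF2 : ringChar F ≠ 2) :
    ∑ b : F, χc F (b ^ 2) = (Fintype.card F : ℂ) - 1 := by
  have h := sum_chi_sq_add (F := F) hF2 0
  rw [if_pos rfl] at h
  rw [← h]
  exact Finset.sum_congr rfl fun b _ => by rw [add_zero]

lemma C0 (hF2 : ringChar F ≠ 2) (h2 : (2 : F) ≠ 0) :
    ∑ x : Fin 3 → F, χc F (disc x)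
      = (Fintype.card F : ℂ) ^ 2 - (Fintype.card F : ℂ) := by
  rw [sum_bca (fun x => χc F (disc x))]
  have : ∀ b c : F, (∑ a : F, χc F (disc ![a, b, c]))
      = if c = 0 then (Fintype.card F : ℂ) * χc F (b ^ 2) else 0 := by
    intro b c
    rw [← hinC hF2 h2 c b]
    exact Finset.sum_congr rfl fun a _ => by rw [disc_mk]
  rw [Finset.sum_congr rfl fun b _ => Finset.sum_congr rfl fun c _ => this b c]
  rw [Finset.sum_congr rfl fun b _ => sum_ite_zero' ((Fintype.card F : ℂ) * χc F (b ^ 2)),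
    ← Finset.mul_sum, sum_chi_sq' hF2]
  ring

lemma C1 (hF2 : ringChar F ≠ 2) (h2 : (2 : F) ≠ 0) :
    ∑ x : Fin 3 → F, χc F (disc x) * ψ (x 2)
      = (Fintype.card F : ℂ) ^ 2 - (Fintype.card F : ℂ) := by
  rw [sum_cba (fun x => χc F (disc x) * ψ (x 2))]
  have step : ∀ c b : F, (∑ a : F, χc F (disc ![a, b, c]) * ψ (![a, b, c] 2))
      = (if c = 0 then (Fintype.card F : ℂ) * χc F (b ^ 2) else 0) * ψ c := by
    intro c b
    simp only [Matrix.cons_val_two, Matrix.tail_cons, Matrix.head_cons]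
    rw [← Finset.sum_mul, ← hinC hF2 h2 c b]
    have hxy : (∑ a : F, χc F (disc ![a, b, c])) = ∑ a : F, χc F (b ^ 2 - 4 * (a * c)) :=
      Finset.sum_congr rfl fun a _ => congrArg (χc F) (disc_mk a b c)
    rw [hxy]
  rw [Finset.sum_congr rfl fun c _ => Finset.sum_congr rfl fun b _ => step c b]
  have hout : ∀ c : F, (∑ b : F, (if c = 0 then (Fintype.card F : ℂ) * χc F (b ^ 2) else 0) * ψ c)
      = if c = 0 then (Fintype.card F : ℂ) * ((Fintype.card F : ℂ) - 1) else 0 := by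
    intro c
    by_cases hc : c = 0
    · subst hc
      simp only [AddChar.map_zero_eq_one, mul_one, eq_self_iff_true, if_true]
      rw [← Finset.mul_sum, sum_chi_sq' hF2]
    · simp [hc]
  rw [Finset.sum_congr rfl fun c _ => hout c, sum_ite_zero']
  ring

lemma C2 (hψ : ψ ≠ 1) (hF2 : ringChar F ≠ 2) (h2 : (2 : F) ≠ 0) :
    ∑ x : Fin 3 → F, χc F (disc x) * ψ (x 1 / 2) = -(Fintype.card F : ℂ) := by
  rw [sum_bac (fun x => χc F (disc x) * ψ (x 1 / 2))]
  have h40 : (4 : F) ≠ 0 := by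
    have : (4 : F) = 2 * 2 := by norm_num
    rw [this]; exact mul_ne_zero h2 h2
  have step : ∀ b a : F, (∑ c : F, χc F (disc ![a, b, c]) * ψ (![a, b, c] 1 / 2))
      = (if a = 0 then (Fintype.card F : ℂ) * χc F (b ^ 2) else 0) * ψ (b / 2) := by
    intro b a
    simp only [Matrix.cons_val_one, Matrix.head_cons, Matrix.cons_val_zero]
    rw [← Finset.sum_mul]
    congr 1
    by_cases ha : a = 0
    · subst ha
      rw [if_pos rfl, Finset.sum_congr rfl fun c _ => by rw [disc_mk, zero_mul, mul_zero, sub_zero],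
        Finset.sum_const, nsmul_eq_mul, Finset.card_univ]
    · rw [if_neg ha, ← sum_chi_affine hF2 (neg_ne_zero.mpr (mul_ne_zero h40 ha)) (b ^ 2)]
      exact Finset.sum_congr rfl fun c _ => by rw [disc_mk]; exact congrArg (χc F) (by ring)
  rw [Finset.sum_congr rfl fun b _ => Finset.sum_congr rfl fun a _ => step b a]
  have hmid : ∀ b : F, (∑ a : F, (if a = 0 then (Fintype.card F : ℂ) * χc F (b ^ 2) else 0) * ψ (b / 2))
      = (Fintype.card F : ℂ) * (χc F (b ^ 2) * ψ (b / 2)) := by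
    intro b
    have : ∀ a : F, (if a = 0 then (Fintype.card F : ℂ) * χc F (b ^ 2) else 0) * ψ (b / 2)
        = if a = 0 then (Fintype.card F : ℂ) * (χc F (b ^ 2) * ψ (b / 2)) else 0 := by
      intro a; split_ifs <;> ring
    rw [Finset.sum_congr rfl fun a _ => this a, sum_ite_zero']
  rw [Finset.sum_congr rfl fun b _ => hmid b, ← Finset.mul_sum]
  have hkey : ∑ b : F, χc F (b ^ 2) * ψ (b / 2)
      = ∑ b : F, (ψ (b / 2) - if b = 0 then 1 else 0) := by
    refine Finset.sum_congr rfl fun b _ => ?_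
    rw [χc_sq_val]
    by_cases hb : b = 0
    · subst hb; simp
    · simp [hb]
  rw [hkey, Finset.sum_sub_distrib, sum_psi_half ψ hψ h2, sum_ite_zero']
  ring

lemma C3 (hψ : ψ ≠ 1) (hF2 : ringChar F ≠ 2) (h2 : (2 : F) ≠ 0) (l : F) (hl0 : l ≠ 0) :
    ∑ x : Fin 3 → F, χc F (disc x) * ψ (x 0 - l * x 2) = -(Fintype.card F : ℂ) := by
  rw [sum_acb (fun x => χc F (disc x) * ψ (x 0 - l * x 2))]
  have h40 : (4 : F) ≠ 0 := by
    have : (4 : F) = 2 * 2 := by norm_num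
    rw [this]; exact mul_ne_zero h2 h2
  have step : ∀ a c : F, (∑ b : F, χc F (disc ![a, b, c]) * ψ (![a, b, c] 0 - l * ![a, b, c] 2))
      = (if a * c = 0 then (Fintype.card F : ℂ) - 1 else -1) * ψ (a - l * c) := by
    intro a c
    simp only [Matrix.cons_val_zero, Matrix.cons_val_two, Matrix.tail_cons, Matrix.head_cons]
    rw [← Finset.sum_mul]
    congr 1
    have hre : ∀ b : F, χc F (disc ![a, b, c]) = χc F (b ^ 2 + (-(4 * (a * c)))) := by
      intro b; rw [disc_mk]; exact congrArg (χc F) (by ring)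
    rw [Finset.sum_congr rfl fun b _ => hre b, sum_chi_sq_add hF2]
    have : (-(4 * (a * c)) = 0) ↔ (a * c = 0) := by
      constructor
      · intro h
        have := neg_eq_zero.mp h
        exact (mul_eq_zero.mp this).resolve_left h40
      · intro h; rw [h]; ring
    simp only [this]
  rw [Finset.sum_congr rfl fun a _ => Finset.sum_congr rfl fun c _ => step a c]
  have hsplit2 : ∀ a c : F, (if a * c = 0 then (Fintype.card F : ℂ) - 1 else -1) * ψ (a - l * c)
      = (Fintype.card F : ℂ) * (if a * c = 0 then ψ (a - l * c) else 0)
        - ψ a * ψ (-l * c) := by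
    intro a c
    rw [psi_split ψ l a c]
    split_ifs <;> ring
  rw [Finset.sum_congr rfl fun a _ => Finset.sum_congr rfl fun c _ => hsplit2 a c]
  simp only [Finset.sum_sub_distrib]
  rw [sum_sum_mul, sum_psi ψ hψ, zero_mul, sub_zero]
  have hfirst : ∀ a : F, (∑ c : F, if a * c = 0 then ψ (a - l * c) else 0)
      = if a = 0 then 0 else ψ a := by
    intro a
    by_cases ha : a = 0
    · subst ha
      rw [if_pos rfl]
      calc (∑ c : F, if (0 : F) * c = 0 then ψ (0 - l * c) else 0)
          = ∑ c : F, ψ (-l * c) :=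
            Finset.sum_congr rfl fun c _ => by
              rw [if_pos (zero_mul c)]; exact congrArg ψ (by ring)
        _ = 0 := sum_psi_mul ψ hψ (neg_ne_zero.mpr hl0)
    · rw [if_neg ha]
      have h2c : ∀ c : F, (if a * c = 0 then ψ (a - l * c) else 0)
          = if c = 0 then ψ (a - l * c) else 0 := by
        intro c
        refine if_congr ?_ rfl rfl
        rw [mul_eq_zero]; simp [ha]
      rw [Finset.sum_congr rfl fun c _ => h2c c,
        Finset.sum_ite_eq' Finset.univ (0 : F) (fun c => ψ (a - l * c))]
      simp
  have hfin1 : ∀ a : F, (∑ c : F, (Fintype.card F : ℂ) * (if a * c = 0 then ψ (a - l * c) else 0))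
      = (Fintype.card F : ℂ) * (if a = 0 then 0 else ψ a) := fun a => by
    rw [← Finset.mul_sum, hfirst a]
  rw [Finset.sum_congr rfl fun a _ => hfin1 a, ← Finset.mul_sum]
  have hlast : (∑ a : F, if a = 0 then (0 : ℂ) else ψ a) = -1 := by
    have hpt : ∀ a : F, (if a = 0 then (0 : ℂ) else ψ a) = ψ a - if a = 0 then 1 else 0 := by
      intro a; by_cases ha : a = 0
      · subst ha; simp
      · simp [ha]
    rw [Finset.sum_congr rfl fun a _ => hpt a, Finset.sum_sub_distrib, sum_psi ψ hψ,
      sum_ite_zero']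
    ring
  rw [hlast]
  ring

end comp2

-- ==== part 7: equivariance and the master lemma ====
section master
variable (ψ : AddChar F ℂ)

lemma bform_act (h2 : (2 : F) ≠ 0) (t : F) (g : Matrix (Fin 2) (Fin 2) F) (x w : Fin 3 → F) :
    bformBQ x (act t g w) = bformBQ (act t gᵀ x) w := by
  simp only [bformBQ, act, Matrix.cons_val_zero, Matrix.cons_val_one, Matrix.head_cons,
    Matrix.cons_val_two, Matrix.tail_cons, Matrix.transpose_apply]
  field_simp
  ring

lemma sum_orbit_reduce (h2 : (2 : F) ≠ 0) {t : F} (ht : t ≠ 0)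
    {m : Matrix (Fin 2) (Fin 2) F} (hm : m.det ≠ 0) (rj w : Fin 3 → F) :
    ∑ x : Fin 3 → F, (if InOrb rj x then (1 : ℂ) else 0) * ψ (bformBQ x (act t m w))
      = ∑ x : Fin 3 → F, (if InOrb rj x then (1 : ℂ) else 0) * ψ (bformBQ x w) := by
  have hdt : (mᵀ).det ≠ 0 := by rwa [Matrix.det_transpose]
  have hb : Function.Bijective (fun x : Fin 3 → F => act t mᵀ x) := by
    refine Function.bijective_iff_has_inverse.mpr ⟨fun x => act t⁻¹ (mᵀ)⁻¹ x, fun x => ?_, fun x => ?_⟩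
    · show act t⁻¹ (mᵀ)⁻¹ (act t mᵀ x) = x
      rw [act_act, inv_mul_cancel₀ ht, Matrix.nonsing_inv_mul _ hdt.isUnit, act_one]
    · show act t mᵀ (act t⁻¹ (mᵀ)⁻¹ x) = x
      rw [act_act, mul_inv_cancel₀ ht, Matrix.mul_nonsing_inv _ hdt.isUnit, act_one]
  calc ∑ x : Fin 3 → F, (if InOrb rj x then (1 : ℂ) else 0) * ψ (bformBQ x (act t m w))
      = ∑ x : Fin 3 → F, (if InOrb rj x then (1 : ℂ) else 0) * ψ (bformBQ (act t mᵀ x) w) :=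
        Finset.sum_congr rfl fun x _ => by rw [bform_act h2 t m x w]
    _ = ∑ x : Fin 3 → F,
        (if InOrb rj (act t mᵀ x) then (1 : ℂ) else 0) * ψ (bformBQ (act t mᵀ x) w) :=
        Finset.sum_congr rfl fun x _ => by
          rw [if_congr (inOrb_act_iff t ht mᵀ hdt rj x).symm rfl rfl]
    _ = ∑ x : Fin 3 → F, (if InOrb rj x then (1 : ℂ) else 0) * ψ (bformBQ x w) :=
        hb.sum_comp (fun y => (if InOrb rj y then (1 : ℂ) else 0) * ψ (bformBQ y w))

lemma master (h2 : (2 : F) ≠ 0)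
    (l : F) (hl : ¬IsSquare l) (w : Fin 3 → F) (α β γ : ℂ)
    (hA : ∑ x : Fin 3 → F, ψ (bformBQ x w) = α)
    (hB : ∑ x : Fin 3 → F, (if disc x = 0 then ψ (bformBQ x w) else 0) = β)
    (hC : ∑ x : Fin 3 → F, χc F (disc x) * ψ (bformBQ x w) = γ) :
    (∑ x : Fin 3 → F, (if InOrb ![0, 0, 0] x then (1 : ℂ) else 0) * ψ (bformBQ x w) = 1) ∧
    (∑ x : Fin 3 → F, (if InOrb ![0, 0, 1] x then (1 : ℂ) else 0) * ψ (bformBQ x w) = β - 1) ∧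
    (∑ x : Fin 3 → F, (if InOrb ![0, 1, 0] x then (1 : ℂ) else 0) * ψ (bformBQ x w)
        = (α - β + γ) / 2) ∧
    (∑ x : Fin 3 → F, (if InOrb ![1, 0, -l] x then (1 : ℂ) else 0) * ψ (bformBQ x w)
        = (α - β - γ) / 2) := by
  have hzero : ψ (bformBQ ![(0 : F), 0, 0] w) = 1 := by
    have h0 : bformBQ ![(0 : F), 0, 0] w = 0 := by simp [bformBQ]
    rw [h0, AddChar.map_zero_eq_one]
  have e0 : ∑ x : Fin 3 → F, (if x = ![(0 : F), 0, 0] then (1 : ℂ) else 0) * ψ (bformBQ x w)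
      = 1 := by
    have hpt : ∀ x : Fin 3 → F, (if x = ![(0 : F), 0, 0] then (1 : ℂ) else 0) * ψ (bformBQ x w)
        = if x = ![(0 : F), 0, 0] then ψ (bformBQ x w) else 0 := by
      intro x; split_ifs <;> ring
    rw [Finset.sum_congr rfl fun x _ => hpt x,
      Finset.sum_ite_eq' Finset.univ (![(0 : F), 0, 0]) (fun x => ψ (bformBQ x w))]
    simp [hzero]
  have hsq : ∑ x : Fin 3 → F, χc F (disc x) * χc F (disc x) * ψ (bformBQ x w) = α - β := by
    have hpt : ∀ x : Fin 3 → F, χc F (disc x) * χc F (disc x) * ψ (bformBQ x w)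
        = ψ (bformBQ x w) - (if disc x = 0 then ψ (bformBQ x w) else 0) := by
      intro x
      by_cases hd : disc x = 0
      · rw [hd, χc_zero, if_pos rfl]; ring
      · rw [χc_sq_self hd, if_neg hd]; ring
    rw [Finset.sum_congr rfl fun x _ => hpt x, Finset.sum_sub_distrib, hA, hB]
  refine ⟨?_, ?_, ?_, ?_⟩
  · calc ∑ x : Fin 3 → F, (if InOrb ![0, 0, 0] x then (1 : ℂ) else 0) * ψ (bformBQ x w)
        = ∑ x : Fin 3 → F, (if x = ![(0 : F), 0, 0] then (1 : ℂ) else 0) * ψ (bformBQ x w) :=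
          Finset.sum_congr rfl fun x _ => by rw [if_congr (orb0 x) rfl rfl]
      _ = 1 := e0
  · calc ∑ x : Fin 3 → F, (if InOrb ![0, 0, 1] x then (1 : ℂ) else 0) * ψ (bformBQ x w)
        = ∑ x : Fin 3 → F, ((if disc x = 0 then ψ (bformBQ x w) else 0)
            - (if x = ![(0 : F), 0, 0] then (1 : ℂ) else 0) * ψ (bformBQ x w)) := by
          refine Finset.sum_congr rfl fun x _ => ?_
          rw [if_congr (orb1 h2 x) rfl rfl]
          by_cases hx : x = ![(0 : F), 0, 0]
          · have hd : disc x = 0 := by rw [hx]; simp [disc]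
            rw [if_neg (fun hcon => hcon.1 hx), if_pos hd, if_pos hx]
            ring
          · by_cases hd : disc x = 0
            · rw [if_pos ⟨hx, hd⟩, if_pos hd, if_neg hx]; ring
            · rw [if_neg (fun hcon => hd hcon.2), if_neg hd, if_neg hx]; ring
      _ = β - 1 := by rw [Finset.sum_sub_distrib, hB, e0]
  · calc ∑ x : Fin 3 → F, (if InOrb ![0, 1, 0] x then (1 : ℂ) else 0) * ψ (bformBQ x w)
        = ∑ x : Fin 3 → F, ((χc F (disc x) * χc F (disc x) * ψ (bformBQ x w)
            + χc F (disc x) * ψ (bformBQ x w)) / 2) := by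
          refine Finset.sum_congr rfl fun x _ => ?_
          rw [if_congr (orb2 h2 x) rfl rfl]
          by_cases hd : disc x = 0
          · rw [if_neg (fun hcon => hcon.1 hd), hd, χc_zero]; ring
          · by_cases hs : IsSquare (disc x)
            · rw [if_pos ⟨hd, hs⟩, χc_isSq hd hs]; ring
            · rw [if_neg (fun hcon => hs hcon.2), χc_nonSq hs]; ring
      _ = (α - β + γ) / 2 := by
          rw [← Finset.sum_div, Finset.sum_add_distrib, hsq, hC]
  · calc ∑ x : Fin 3 → F, (if InOrb ![1, 0, -l] x then (1 : ℂ) else 0) * ψ (bformBQ x w)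
        = ∑ x : Fin 3 → F, ((χc F (disc x) * χc F (disc x) * ψ (bformBQ x w)
            - χc F (disc x) * ψ (bformBQ x w)) / 2) := by
          refine Finset.sum_congr rfl fun x _ => ?_
          rw [if_congr (orb3 h2 l hl x) rfl rfl]
          by_cases hd : disc x = 0
          · rw [if_neg (fun hcon => hcon ⟨0, by rw [hd]; ring⟩), hd, χc_zero]; ring
          · by_cases hs : IsSquare (disc x)
            · rw [if_neg (fun hcon => hcon hs), χc_isSq hd hs]; ring
            · rw [if_pos hs, χc_nonSq hs]; ring
      _ = (α - β - γ) / 2 := by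
          rw [← Finset.sum_div, Finset.sum_sub_distrib, hsq, hC]

end master

end BQA

/-- the Fourier transform matrix for binary quadratic forms, `p ≠ 2`. -/
theorem stmt11 (p : ℕ) [Fact p.Prime] [CharP F p] (hp : p ≠ 2) (l : F) (hl : ¬ IsSquare l) :
    let r : Fin 4 → Fin 3 → F := ![![0,0,0], ![0,0,1], ![0,1,0], ![1,0,-l]]
    let q : ℚ := (Fintype.card F : ℚ)
    let M : Matrix (Fin 4) (Fin 4) ℚ :=
      !![1, q^2-1, q*(q^2-1)/2, q*(q-1)^2/2;
         1, -1, (q^2-q)/2, -((q^2-q)/2);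
         1, q-1, -q, 0;
         1, -(q+1), 0, q]
    ∀ (i j : Fin 4) (y : Fin 3 → F), InOrbitBQ (r i) y →
      (Fintype.card F : ℂ) ^ 3 * FTBQ p (fun x => if InOrbitBQ (r j) x then 1 else 0) y
        = (M i j : ℂ) := by
  intro r q M i j y hy
  have hq : q = (Fintype.card F : ℚ) := rfl
  have hM : M = !![1, q ^ 2 - 1, q * (q ^ 2 - 1) / 2, q * (q - 1) ^ 2 / 2;
      1, -1, (q ^ 2 - q) / 2, -((q ^ 2 - q) / 2);
      1, q - 1, -q, 0;
      1, -(q + 1), 0, q] := rfl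
  have hr : r = ![![(0 : F), 0, 0], ![0, 0, 1], ![0, 1, 0], ![1, 0, -l]] := rfl
  have hprime : p.Prime := Fact.out
  have h2 : (2 : F) ≠ 0 := by
    have h22 : (2 : F) = ((2 : ℕ) : F) := by norm_num
    rw [h22, Ne, CharP.cast_eq_zero_iff F p]
    intro hdvd
    exact hp ((Nat.prime_dvd_prime_iff_eq hprime Nat.prime_two).mp hdvd)
  have hF2 : ringChar F ≠ 2 := by rw [ringChar.eq F p]; exact hp
  have hl0 : l ≠ 0 := fun h => hl (h ▸ ⟨0, by ring⟩)
  have hψ := BQA.ψa_ne_one (F := F) p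
  have hq0 : (Fintype.card F : ℂ) ≠ 0 := Nat.cast_ne_zero.mpr Fintype.card_ne_zero
  unfold FTBQ
  rw [← mul_assoc, mul_inv_cancel₀ (pow_ne_zero 3 hq0), one_mul, BQA.psiF_eq (F := F) p]
  simp only [BQA.inOrbitBQ_iff]
  obtain ⟨t, ht, m, hm, hym⟩ := (BQA.inOrbitBQ_iff (r i) y).mp hy
  rw [← hym, hr, BQA.sum_orbit_reduce (BQA.ψa p F) h2 ht hm]
  rw [hM, hq]
  have hbf0 : ∀ x : Fin 3 → F, bformBQ x ![(0 : F), 0, 0] = 0 := fun x => by simp [bformBQ]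
  have hbf1 : ∀ x : Fin 3 → F, bformBQ x ![(0 : F), 0, 1] = x 2 := fun x => by simp [bformBQ]
  have hbf2 : ∀ x : Fin 3 → F, bformBQ x ![(0 : F), 1, 0] = x 1 / 2 := fun x => by
    simp [bformBQ]
  have hbf3 : ∀ x : Fin 3 → F, bformBQ x ![(1 : F), 0, -l] = x 0 - l * x 2 := fun x => by
    simp [bformBQ]; ring
  have E0 := BQA.master (BQA.ψa p F) h2 l hl ![(0 : F), 0, 0]
    ((Fintype.card F : ℂ) ^ 3) ((Fintype.card F : ℂ) ^ 2)
    ((Fintype.card F : ℂ) ^ 2 - (Fintype.card F : ℂ))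
    (by calc ∑ x : Fin 3 → F, (BQA.ψa p F) (bformBQ x ![(0 : F), 0, 0])
          = ∑ _x : Fin 3 → F, (1 : ℂ) :=
            Finset.sum_congr rfl fun x _ => by rw [hbf0 x, AddChar.map_zero_eq_one]
        _ = (Fintype.card F : ℂ) ^ 3 := BQA.count_all)
    (by calc ∑ x : Fin 3 → F, (if BQA.disc x = 0 then (BQA.ψa p F) (bformBQ x ![(0 : F), 0, 0]) else 0)
          = ∑ x : Fin 3 → F, (if BQA.disc x = 0 then (1 : ℂ) else 0) :=
            Finset.sum_congr rfl fun x _ =>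
              if_congr Iff.rfl (by rw [hbf0 x, AddChar.map_zero_eq_one]) rfl
        _ = (Fintype.card F : ℂ) ^ 2 := BQA.B0 hF2 h2)
    (by calc ∑ x : Fin 3 → F, BQA.χc F (BQA.disc x) * (BQA.ψa p F) (bformBQ x ![(0 : F), 0, 0])
          = ∑ x : Fin 3 → F, BQA.χc F (BQA.disc x) :=
            Finset.sum_congr rfl fun x _ => by rw [hbf0 x, AddChar.map_zero_eq_one, mul_one]
        _ = (Fintype.card F : ℂ) ^ 2 - (Fintype.card F : ℂ) := BQA.C0 hF2 h2)
  have E1 := BQA.master (BQA.ψa p F) h2 l hl ![(0 : F), 0, 1]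
    0 0 ((Fintype.card F : ℂ) ^ 2 - (Fintype.card F : ℂ))
    (by calc ∑ x : Fin 3 → F, (BQA.ψa p F) (bformBQ x ![(0 : F), 0, 1])
          = ∑ x : Fin 3 → F, (BQA.ψa p F) (x 2) :=
            Finset.sum_congr rfl fun x _ => congrArg _ (hbf1 x)
        _ = 0 := BQA.A1 _ hψ)
    (by calc ∑ x : Fin 3 → F, (if BQA.disc x = 0 then (BQA.ψa p F) (bformBQ x ![(0 : F), 0, 1]) else 0)
          = ∑ x : Fin 3 → F, (if BQA.disc x = 0 then (BQA.ψa p F) (x 2) else 0) :=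
            Finset.sum_congr rfl fun x _ => if_congr Iff.rfl (congrArg _ (hbf1 x)) rfl
        _ = 0 := BQA.B1 _ hψ hF2)
    (by calc ∑ x : Fin 3 → F, BQA.χc F (BQA.disc x) * (BQA.ψa p F) (bformBQ x ![(0 : F), 0, 1])
          = ∑ x : Fin 3 → F, BQA.χc F (BQA.disc x) * (BQA.ψa p F) (x 2) :=
            Finset.sum_congr rfl fun x _ => by rw [hbf1 x]
        _ = (Fintype.card F : ℂ) ^ 2 - (Fintype.card F : ℂ) := BQA.C1 _ hF2 h2)
  have E2 := BQA.master (BQA.ψa p F) h2 l hl ![(0 : F), 1, 0]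
    0 (Fintype.card F : ℂ) (-(Fintype.card F : ℂ))
    (by calc ∑ x : Fin 3 → F, (BQA.ψa p F) (bformBQ x ![(0 : F), 1, 0])
          = ∑ x : Fin 3 → F, (BQA.ψa p F) (x 1 / 2) :=
            Finset.sum_congr rfl fun x _ => congrArg _ (hbf2 x)
        _ = 0 := BQA.A2 _ hψ h2)
    (by calc ∑ x : Fin 3 → F, (if BQA.disc x = 0 then (BQA.ψa p F) (bformBQ x ![(0 : F), 1, 0]) else 0)
          = ∑ x : Fin 3 → F, (if BQA.disc x = 0 then (BQA.ψa p F) (x 1 / 2) else 0) :=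
            Finset.sum_congr rfl fun x _ => if_congr Iff.rfl (congrArg _ (hbf2 x)) rfl
        _ = (Fintype.card F : ℂ) := BQA.B2 _ hψ hF2 h2)
    (by calc ∑ x : Fin 3 → F, BQA.χc F (BQA.disc x) * (BQA.ψa p F) (bformBQ x ![(0 : F), 1, 0])
          = ∑ x : Fin 3 → F, BQA.χc F (BQA.disc x) * (BQA.ψa p F) (x 1 / 2) :=
            Finset.sum_congr rfl fun x _ => by rw [hbf2 x]
        _ = -(Fintype.card F : ℂ) := BQA.C2 _ hψ hF2 h2)
  have E3 := BQA.master (BQA.ψa p F) h2 l hl ![(1 : F), 0, -l]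
    0 (-(Fintype.card F : ℂ)) (-(Fintype.card F : ℂ))
    (by calc ∑ x : Fin 3 → F, (BQA.ψa p F) (bformBQ x ![(1 : F), 0, -l])
          = ∑ x : Fin 3 → F, (BQA.ψa p F) (x 0 - l * x 2) :=
            Finset.sum_congr rfl fun x _ => congrArg _ (hbf3 x)
        _ = 0 := BQA.A3 _ hψ l hl0)
    (by calc ∑ x : Fin 3 → F, (if BQA.disc x = 0 then (BQA.ψa p F) (bformBQ x ![(1 : F), 0, -l]) else 0)
          = ∑ x : Fin 3 → F, (if BQA.disc x = 0 then (BQA.ψa p F) (x 0 - l * x 2) else 0) :=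
            Finset.sum_congr rfl fun x _ => if_congr Iff.rfl (congrArg _ (hbf3 x)) rfl
        _ = -(Fintype.card F : ℂ) := BQA.B3 _ hψ hF2 h2 l hl)
    (by calc ∑ x : Fin 3 → F, BQA.χc F (BQA.disc x) * (BQA.ψa p F) (bformBQ x ![(1 : F), 0, -l])
          = ∑ x : Fin 3 → F, BQA.χc F (BQA.disc x) * (BQA.ψa p F) (x 0 - l * x 2) :=
            Finset.sum_congr rfl fun x _ => by rw [hbf3 x]
        _ = -(Fintype.card F : ℂ) := BQA.C3 _ hψ hF2 h2 l hl0)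
  have hf0 : ∀ (h : (0 : ℕ) < 4), (⟨0, h⟩ : Fin 4) = 0 := fun _ => rfl
  have hf1 : ∀ (h : (1 : ℕ) < 4), (⟨1, h⟩ : Fin 4) = 1 := fun _ => rfl
  have hf2 : ∀ (h : (2 : ℕ) < 4), (⟨2, h⟩ : Fin 4) = 2 := fun _ => rfl
  have hf3 : ∀ (h : (3 : ℕ) < 4), (⟨3, h⟩ : Fin 4) = 3 := fun _ => rfl
  fin_cases i <;> fin_cases j <;>
    simp only [hf0, hf1, hf2, hf3, Fin.isValue, Matrix.cons_val_zero, Matrix.cons_val_one,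
      Matrix.head_cons, Matrix.cons_val_two, Matrix.tail_cons, Matrix.cons_val_three,
      Matrix.cons_val', Matrix.empty_val', Matrix.cons_val_fin_one, Matrix.head_fin_const,
      Matrix.of_apply]
  · rw [E0.1]; push_cast; ring
  · rw [E0.2.1]; push_cast; ring
  · rw [E0.2.2.1]; push_cast; ring
  · rw [E0.2.2.2]; push_cast; ring
  · rw [E1.1]; push_cast; ring
  · rw [E1.2.1]; push_cast; ring
  · rw [E1.2.2.1]; push_cast; ring
  · rw [E1.2.2.2]; push_cast; ring
  · rw [E2.1]; push_cast; ring
  · rw [E2.2.1]; push_cast; ring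
  · rw [E2.2.2.1]; push_cast; ring
  · rw [E2.2.2.2]; push_cast; ring
  · rw [E3.1]; push_cast; ring
  · rw [E3.2.1]; push_cast; ring
  · rw [E3.2.2.1]; push_cast; ring
  · rw [E3.2.2.2]; push_cast; ring


end
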